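/- Let 0 < p < 1 < q, let μ₁ > 0, μ₂ > 0, 0 < μ₃ < ∞, and let τ ∈ (0,1). Suppose V : [0,∞) → [0,∞) is differentiable and satisfies V'(t) ≤ -μ₁·V(t)^p - μ₂·V(t)^q + μ₃ for all t ≥ 0. Define the settling-time bound T₁ = max{ [Γ((1-p)/(q-p))·Γ((q-1)/(q-p)) / (μ₁(q-p))]·(μ₁/(τμ₂))^((1-p)/(q-p)) , [Γ((1-p)/(q-p))·Γ((q-1)/(q-p)) / (τμ₁(q-p))]·(τμ₁/μ₂)^((1-p)/(q-p)) }, where Γ is the Gamma function. Then for every t ≥ T₁ one has V(t) ≤ R, where R = min{ (μ₃/((1-τ)μ₁))^(1/p) , (μ₃/((1-τ)μ₂))^(1/q) } (improved fixed-time stability, Lemma 1). -/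

import Mathlib

open Real MeasureTheory Set intervalIntegral

section aux

lemma aux_denom_pos {p q a b : ℝ} (ha : 0 < a) (hb : 0 < b) {w : ℝ} (hw : 0 < w) :
    0 < a * w ^ p + b * w ^ q :=
  add_pos (mul_pos ha (Real.rpow_pos_of_pos hw p)) (mul_pos hb (Real.rpow_pos_of_pos hw q))

lemma aux_contOn {p q a b : ℝ} (ha : 0 < a) (hb : 0 < b) :
    ContinuousOn (fun w : ℝ => (a * w ^ p + b * w ^ q)⁻¹) (Ioi 0) := by
  intro x hx
  have hx0 : (0:ℝ) < x := hx
  have h1 : ContinuousAt (fun w : ℝ => a * w ^ p + b * w ^ q) x :=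
    (((Real.continuousAt_rpow_const x p (Or.inl hx0.ne')).const_mul a).add
      ((Real.continuousAt_rpow_const x q (Or.inl hx0.ne')).const_mul b))
  exact (h1.inv₀ (aux_denom_pos ha hb hx0).ne').continuousWithinAt

lemma aux_integrable {p q a b : ℝ} (hp : 0 < p) (hp1 : p < 1) (hq : 1 < q)
    (ha : 0 < a) (hb : 0 < b) :
    IntegrableOn (fun w : ℝ => (a * w ^ p + b * w ^ q)⁻¹) (Ioi 0) := by
  have hmeas : ∀ s : Set ℝ, s ⊆ Ioi 0 → MeasurableSet s →
      AEStronglyMeasurable (fun w : ℝ => (a * w ^ p + b * w ^ q)⁻¹) (volume.restrict s) := by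
    intro s hs hms
    exact ((aux_contOn ha hb).mono hs).aestronglyMeasurable hms
  rw [← Ioc_union_Ioi_eq_Ioi (zero_le_one (α := ℝ)), integrableOn_union]
  constructor
  · -- dominate by a⁻¹ * w^(-p) on Ioc 0 1
    have hint : IntegrableOn (fun w : ℝ => a⁻¹ * w ^ (-p)) (Ioc 0 1) := by
      exact (intervalIntegrable_rpow' (a := 0) (b := 1) (r := -p) (by linarith)).1.const_mul _
    refine hint.mono ?_ le_rfl |>.congr_fun (fun _ _ => rfl) measurableSet_Ioc |>.mono' (hmeas _ Ioc_subset_Ioi_self measurableSet_Ioc) ?_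
    · exact le_rfl
    · filter_upwards [ae_restrict_mem measurableSet_Ioc] with w hw
      have hw0 : (0:ℝ) < w := hw.1
      rw [Real.norm_eq_abs, abs_of_nonneg (inv_nonneg.2 (aux_denom_pos ha hb hw0).le)]
      rw [Real.rpow_neg hw0.le, ← mul_inv]
      apply inv_anti₀ (by positivity)
      exact le_add_of_nonneg_right (by positivity)
  · -- dominate by b⁻¹ * w^(-q) on Ioi 1
    have hint : IntegrableOn (fun w : ℝ => b⁻¹ * w ^ (-q)) (Ioi 1) :=
      (integrableOn_Ioi_rpow_of_lt (by linarith) one_pos).const_mul _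
    refine hint.mono' (hmeas _ (fun x (hx : x ∈ Ioi (1:ℝ)) => mem_Ioi.2 (lt_trans one_pos (mem_Ioi.1 hx))) measurableSet_Ioi) ?_
    filter_upwards [ae_restrict_mem measurableSet_Ioi] with w hw
    have hw0 : (0:ℝ) < w := lt_trans one_pos hw
    rw [Real.norm_eq_abs, abs_of_nonneg (inv_nonneg.2 (aux_denom_pos ha hb hw0).le)]
    rw [Real.rpow_neg hw0.le, ← mul_inv]
    apply inv_anti₀ (by positivity)
    exact le_add_of_nonneg_left (by positivity)

lemma aux_J_integrable {X : ℝ} (hX0 : 0 < X) (hX1 : X < 1) :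
    IntegrableOn (fun u : ℝ => u ^ (X - 1) * (1 + u)⁻¹) (Ioi 0) := by
  have hmeas : ∀ s : Set ℝ, MeasurableSet s →
      AEStronglyMeasurable (fun u : ℝ => u ^ (X - 1) * (1 + u)⁻¹) (volume.restrict s) := by
    intro s hms
    exact ((measurable_id'.pow_const (X-1)).mul
      ((measurable_const.add measurable_id).inv)).aestronglyMeasurable
  rw [← Ioc_union_Ioi_eq_Ioi (zero_le_one (α := ℝ)), integrableOn_union]
  constructor
  · have hint : IntegrableOn (fun u : ℝ => u ^ (X - 1)) (Ioc 0 1) :=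
      (intervalIntegrable_rpow' (a := 0) (b := 1) (r := X-1) (by linarith)).1
    refine hint.mono' (hmeas _ measurableSet_Ioc) ?_
    filter_upwards [ae_restrict_mem measurableSet_Ioc] with u hu
    have hu0 : (0:ℝ) < u := hu.1
    rw [Real.norm_eq_abs, abs_of_nonneg (by positivity)]
    calc u ^ (X - 1) * (1 + u)⁻¹ ≤ u ^ (X - 1) * 1 := by
          gcongr
          rw [inv_le_one_iff₀]; right; linarith
      _ = u ^ (X - 1) := mul_one _
  · have hint : IntegrableOn (fun u : ℝ => u ^ (X - 2)) (Ioi 1) :=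
      integrableOn_Ioi_rpow_of_lt (by linarith) one_pos
    refine hint.mono' (hmeas _ measurableSet_Ioi) ?_
    filter_upwards [ae_restrict_mem measurableSet_Ioi] with u hu
    have hu0 : (0:ℝ) < u := lt_trans one_pos hu
    rw [Real.norm_eq_abs, abs_of_nonneg (by positivity)]
    have h1 : u ^ (X - 2) = u ^ (X-1) * u⁻¹ := by
      rw [← Real.rpow_neg_one u, ← Real.rpow_add hu0]; ring_nf
    rw [h1]
    exact mul_le_mul_of_nonneg_left (inv_anti₀ hu0 (by linarith)) (by positivity)

lemma aux_J_eq {X : ℝ} (hX0 : 0 < X) (hX1 : X < 1) :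
    ∫ u in Ioi (0:ℝ), u ^ (X - 1) * (1 + u)⁻¹ = Real.Gamma X * Real.Gamma (1 - X) := by
  set F : ℝ → ℝ → ℝ := fun u s => u ^ (X - 1) * Real.exp (-((1 + u) * s)) with hF
  -- inner integral over s
  have hinner : ∀ u : ℝ, u ∈ Ioi (0:ℝ) →
      ∫ s in Ioi (0:ℝ), F u s = u ^ (X - 1) * (1 + u)⁻¹ := by
    intro u hu
    have hu0 : (0:ℝ) < u := hu
    have h1u : (0:ℝ) < 1 + u := by linarith
    rw [MeasureTheory.integral_const_mul]
    congr 1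
    have := Real.integral_rpow_mul_exp_neg_mul_Ioi (a := 1) (r := 1 + u) one_pos h1u
    simp only [Real.rpow_one, Real.Gamma_one, mul_one] at this
    rw [one_div] at this
    rw [← this]
    refine setIntegral_congr_fun measurableSet_Ioi (fun s hs => ?_)
    rw [sub_self, Real.rpow_zero, one_mul]
  -- integrability on the product
  have hF_meas : AEStronglyMeasurable (Function.uncurry F)
      ((volume.restrict (Ioi (0:ℝ))).prod (volume.restrict (Ioi (0:ℝ)))) := by
    apply Measurable.aestronglyMeasurable
    apply Measurable.mul
    · exact measurable_fst.pow_const (X-1)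
    · exact (((measurable_const.add measurable_fst).mul measurable_snd).neg).exp
  have hFint : Integrable (Function.uncurry F)
      ((volume.restrict (Ioi (0:ℝ))).prod (volume.restrict (Ioi (0:ℝ)))) := by
    rw [integrable_prod_iff hF_meas]
    constructor
    · filter_upwards [ae_restrict_mem measurableSet_Ioi] with u hu
      have hu0 : (0:ℝ) < u := hu
      have h1u : (0:ℝ) < 1 + u := by linarith
      have : IntegrableOn (fun s : ℝ => Real.exp (-(1+u) * s)) (Ioi 0) :=
        exp_neg_integrableOn_Ioi 0 h1u
      refine (this.const_mul (u ^ (X-1))).congr ?_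
      filter_upwards with s
      simp only [F, neg_mul, Function.uncurry_apply_pair]
    · have hJ : IntegrableOn (fun u : ℝ => u ^ (X - 1) * (1 + u)⁻¹) (Ioi 0) :=
        aux_J_integrable hX0 hX1
      refine hJ.congr ?_
      filter_upwards [ae_restrict_mem measurableSet_Ioi] with u hu
      have hu0 : (0:ℝ) < u := hu
      rw [← hinner u hu]
      refine integral_congr_ae ?_
      filter_upwards [ae_restrict_mem measurableSet_Ioi] with s hs
      simp only [F, Function.uncurry_apply_pair]
      rw [Real.norm_eq_abs, abs_of_nonneg (by positivity)]
  -- swap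
  have hswap := MeasureTheory.integral_integral_swap hFint
  calc ∫ u in Ioi (0:ℝ), u ^ (X - 1) * (1 + u)⁻¹
      = ∫ u in Ioi (0:ℝ), ∫ s in Ioi (0:ℝ), F u s :=
        (setIntegral_congr_fun measurableSet_Ioi (fun u hu => (hinner u hu).symm))
    _ = ∫ s in Ioi (0:ℝ), ∫ u in Ioi (0:ℝ), F u s := hswap
    _ = ∫ s in Ioi (0:ℝ), Real.Gamma X * (s ^ ((1 - X) - 1) * Real.exp (-(1 * s))) := by
        refine setIntegral_congr_fun measurableSet_Ioi (fun s hs => ?_)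
        have hs0 : (0:ℝ) < s := hs
        have : ∫ u in Ioi (0:ℝ), F u s
            = ∫ u in Ioi (0:ℝ), Real.exp (-s) * (u ^ (X-1) * Real.exp (-(s * u))) := by
          refine setIntegral_congr_fun measurableSet_Ioi (fun u hu => ?_)
          rw [hF]; dsimp only
          rw [show -((1 + u) * s) = -s + -(s * u) by ring, Real.exp_add]; ring
        rw [this, MeasureTheory.integral_const_mul,
          Real.integral_rpow_mul_exp_neg_mul_Ioi hX0 hs0]
        rw [one_div, Real.inv_rpow hs0.le, ← Real.rpow_neg hs0.le]
        rw [one_mul]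
        ring_nf
    _ = Real.Gamma X * Real.Gamma (1 - X) := by
        rw [MeasureTheory.integral_const_mul,
          Real.integral_rpow_mul_exp_neg_mul_Ioi (by linarith) one_pos]
        simp


lemma key_integral {p q a b : ℝ} (hp : 0 < p) (hp1 : p < 1) (hq : 1 < q)
    (ha : 0 < a) (hb : 0 < b) :
    ∫ w in Ioi (0:ℝ), (a * w ^ p + b * w ^ q)⁻¹
      = Real.Gamma ((1-p)/(q-p)) * Real.Gamma ((q-1)/(q-p)) / (a * (q-p))
        * (a/b) ^ ((1-p)/(q-p)) := by
  have hqp : 0 < q - p := by linarith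
  set X : ℝ := (1-p)/(q-p) with hX
  have hX0 : 0 < X := div_pos (by linarith) hqp
  have hX1 : X < 1 := (div_lt_one hqp).2 (by linarith)
  have hY : (q-1)/(q-p) = 1 - X := by rw [hX]; field_simp; ring
  set c : ℝ := (q-p)⁻¹ with hc
  have hc0 : 0 < c := inv_pos.2 hqp
  -- step 1 : substitution w = x^c
  have step1 : ∫ w in Ioi (0:ℝ), (a * w ^ p + b * w ^ q)⁻¹
      = ∫ x in Ioi (0:ℝ), c * (x ^ (X - 1) * (a + b * x)⁻¹) := by
    rw [← MeasureTheory.integral_comp_rpow_Ioi_of_pos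
      (g := fun w : ℝ => (a * w ^ p + b * w ^ q)⁻¹) hc0]
    refine setIntegral_congr_fun measurableSet_Ioi (fun x hx => ?_)
    have hx0 : (0:ℝ) < x := hx
    have e1 : (x ^ c) ^ p = x ^ (c * p) := (Real.rpow_mul hx0.le c p).symm
    have e2 : (x ^ c) ^ q = x ^ (c * q) := (Real.rpow_mul hx0.le c q).symm
    have hcq : c * q = c * p + 1 := by
      rw [hc]
      field_simp
      ring
    have e3 : x ^ (c * q) = x ^ (c * p) * x := by
      rw [hcq, Real.rpow_add hx0, Real.rpow_one]
    have e4 : x ^ (c - 1) = x ^ (X - 1) * x ^ (c * p) := by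
      rw [← Real.rpow_add hx0]
      congr 1
      rw [hX, hc]
      field_simp
      ring
    have hxp : (0:ℝ) < x ^ (c * p) := Real.rpow_pos_of_pos hx0 _
    rw [smul_eq_mul, e1, e2, e3, e4]
    rw [show a * x ^ (c*p) + b * (x ^ (c*p) * x) = (x ^ (c*p)) * (a + b * x) by ring]
    rw [mul_inv]
    field_simp
  -- step 2 : substitution x = (a/b) * y , i.e. use g(k x) with k = b/a
  have hk0 : 0 < b / a := div_pos hb ha
  have step2 : ∫ x in Ioi (0:ℝ), x ^ (X - 1) * (a + b * x)⁻¹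
      = a⁻¹ * ((b/a) ^ (1 - X) * ((b/a)⁻¹ * (Real.Gamma X * Real.Gamma (1 - X)))) := by
    have hsub := MeasureTheory.integral_comp_mul_left_Ioi
      (g := fun y : ℝ => y ^ (X - 1) * (1 + y)⁻¹) (a := 0) (b := b/a) hk0
    rw [mul_zero] at hsub
    rw [aux_J_eq hX0 hX1] at hsub
    have : ∫ x in Ioi (0:ℝ), x ^ (X - 1) * (a + b * x)⁻¹
        = ∫ x in Ioi (0:ℝ), a⁻¹ * ((b/a) ^ (1 - X) * ((b/a*x) ^ (X - 1) * (1 + b/a*x)⁻¹)) := by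
      refine setIntegral_congr_fun measurableSet_Ioi (fun x hx => ?_)
      have hx0 : (0:ℝ) < x := hx
      rw [Real.mul_rpow hk0.le hx0.le]
      have h1 : (1 + b/a*x)⁻¹ = a * (a + b*x)⁻¹ := by
        rw [show (1 + b/a*x) = (a + b*x) / a by field_simp, inv_div, div_eq_mul_inv, mul_comm]
      rw [h1]
      have h2 : (b/a) ^ (1-X) * (b/a) ^ (X-1) = 1 := by
        rw [← Real.rpow_add hk0]
        norm_num
      calc x ^ (X - 1) * (a + b * x)⁻¹
          = a⁻¹ * (((b/a) ^ (1-X) * (b/a) ^ (X-1)) * (x ^ (X-1) * (a * (a + b*x)⁻¹))) := by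
            rw [h2]; field_simp
        _ = a⁻¹ * ((b/a) ^ (1 - X) * ((b/a) ^ (X - 1) * x ^ (X - 1) * (a * (a + b*x)⁻¹))) := by
            ring
    rw [this, MeasureTheory.integral_const_mul, MeasureTheory.integral_const_mul]
    simp only [smul_eq_mul] at hsub
    rw [hsub]
  -- combine
  rw [step1, MeasureTheory.integral_const_mul, step2, hY]
  have hab : (a/b) ^ X = (b/a) ^ (1-X) * (b/a)⁻¹ := by
    rw [← Real.rpow_neg_one (b/a), ← Real.rpow_add hk0,
      show 1 - X + -1 = -X by ring, Real.rpow_neg hk0.le,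
      ← Real.inv_rpow hk0.le, inv_div]
  rw [hab, hc]
  field_simp


lemma settle {p q a b R : ℝ} (hp : 0 < p) (hp1 : p < 1) (hq : 1 < q)
    (ha : 0 < a) (hb : 0 < b) (hR : 0 < R)
    (V : ℝ → ℝ) (hVdiff : Differentiable ℝ V)
    (hC : ∀ u, 0 ≤ u → R ≤ V u → deriv V u ≤ -(a * V u ^ p + b * V u ^ q))
    {t : ℝ} (ht : ∫ w in Ioi (0:ℝ), (a * w ^ p + b * w ^ q)⁻¹ ≤ t) :
    V t ≤ R := by
  set f : ℝ → ℝ := fun w => (a * w ^ p + b * w ^ q)⁻¹ with hf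
  have hfint : IntegrableOn f (Ioi 0) := aux_integrable hp hp1 hq ha hb
  set I : ℝ := ∫ w in Ioi (0:ℝ), f w with hI
  have hfnonneg : ∀ᵐ w ∂(volume.restrict (Ioi (0:ℝ))), 0 ≤ f w := by
    filter_upwards [ae_restrict_mem measurableSet_Ioi] with w hw
    exact (inv_pos.2 (aux_denom_pos ha hb hw)).le
  set G : ℝ → ℝ := fun v => ∫ w in (0:ℝ)..v, f w with hG
  -- G v = ∫ over Ioc 0 v for 0 ≤ v
  have hGioc : ∀ v : ℝ, 0 ≤ v → G v = ∫ w in Ioc (0:ℝ) v, f w := fun v hv =>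
    intervalIntegral.integral_of_le hv
  have hG_le_I : ∀ v : ℝ, 0 ≤ v → G v ≤ I := by
    intro v hv
    rw [hGioc v hv, hI]
    exact setIntegral_mono_set hfint hfnonneg
      (HasSubset.Subset.eventuallyLE Ioc_subset_Ioi_self)
  have hG_mono : ∀ v₁ v₂ : ℝ, 0 ≤ v₁ → v₁ ≤ v₂ → G v₁ ≤ G v₂ := by
    intro v₁ v₂ h1 h12
    rw [hGioc v₁ h1, hGioc v₂ (h1.trans h12)]
    refine setIntegral_mono_set (hfint.mono_set Ioc_subset_Ioi_self)
      ?_ (HasSubset.Subset.eventuallyLE (Ioc_subset_Ioc_right h12))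
    filter_upwards [ae_restrict_mem measurableSet_Ioc] with w hw
    exact (inv_pos.2 (aux_denom_pos ha hb hw.1)).le
  have hGR_pos : 0 < G R := by
    rw [hGioc R hR.le]
    have hcR : (0:ℝ) < (a * R ^ p + b * R ^ q)⁻¹ :=
      inv_pos.2 (aux_denom_pos ha hb hR)
    have hconst : ∀ w ∈ Ioc (0:ℝ) R, (a * R ^ p + b * R ^ q)⁻¹ ≤ f w := by
      intro w hw
      apply inv_anti₀ (aux_denom_pos ha hb hw.1)
      have h1 : w ^ p ≤ R ^ p := Real.rpow_le_rpow hw.1.le hw.2 hp.le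
      have h2 : w ^ q ≤ R ^ q := Real.rpow_le_rpow hw.1.le hw.2 (by linarith)
      have := mul_le_mul_of_nonneg_left h1 ha.le
      have := mul_le_mul_of_nonneg_left h2 hb.le
      linarith
    calc (0:ℝ) < (a * R ^ p + b * R ^ q)⁻¹ * (volume (Ioc (0:ℝ) R)).toReal := by
          rw [Real.volume_Ioc, ENNReal.toReal_ofReal (by linarith)]
          have : (0:ℝ) < R - 0 := by linarith
          positivity
      _ ≤ ∫ w in Ioc (0:ℝ) R, f w :=
          by
            have := setIntegral_ge_of_const_le_real measurableSet_Ioc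
              (by rw [Real.volume_Ioc]; exact ENNReal.ofReal_ne_top) hconst
              (hfint.mono_set Ioc_subset_Ioi_self)
            rwa [measureReal_def] at this
  have hIt : 0 < I := lt_of_lt_of_le hGR_pos (hG_le_I R hR.le)
  have ht0 : 0 < t := lt_of_lt_of_le hIt ht
  -- FTC
  have hG_deriv : ∀ v : ℝ, 0 < v → HasDerivAt G (f v) v := by
    intro v hv
    refine intervalIntegral.integral_hasDerivAt_right
      ((intervalIntegrable_iff_integrableOn_Ioc_of_le hv.le).2
        (hfint.mono_set Ioc_subset_Ioi_self))
      (ContinuousOn.stronglyMeasurableAtFilter isOpen_Ioi (aux_contOn ha hb) v hv)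
      ((aux_contOn ha hb).continuousAt (Ioi_mem_nhds hv))
  by_contra hVt
  push_neg at hVt
  -- two cases on whether V ever dips below R on [0,t]
  by_cases hE : ∃ u ∈ Icc 0 t, V u ≤ R
  · -- sSup argument
    obtain ⟨u₀, hu₀, hVu₀⟩ := hE
    set E : Set ℝ := {u | u ∈ Icc 0 t ∧ V u ≤ R} with hEdef
    have hEne : E.Nonempty := ⟨u₀, hu₀, hVu₀⟩
    have hEbdd : BddAbove E := BddAbove.mono (fun u hu => hu.1) bddAbove_Icc
    have hEclosed : IsClosed E := by
      have : E = Icc 0 t ∩ V ⁻¹' (Iic R) := by ext u; simp [hEdef, And.comm]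
      rw [this]
      exact isClosed_Icc.inter (IsClosed.preimage hVdiff.continuous isClosed_Iic)
    set σ : ℝ := sSup E with hσ
    have hσE : σ ∈ E := hEclosed.csSup_mem hEne hEbdd
    have hσt : σ < t := by
      rcases lt_or_eq_of_le hσE.1.2 with h | h
      · exact h
      · exact absurd (h ▸ hσE.2) (not_le.mpr hVt)
    have hgt : ∀ u, σ < u → u ≤ t → R < V u := by
      intro u h1 h2
      by_contra h
      push_neg at h
      have hmem : u ∈ E := ⟨⟨hσE.1.1.trans h1.le, h2⟩, h⟩
      exact absurd (le_csSup hEbdd hmem) (not_le.mpr h1)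
    have hVσR : V σ = R := by
      refine le_antisymm hσE.2 ?_
      have htend : Filter.Tendsto V (nhdsWithin σ (Ioi σ)) (nhds (V σ)) :=
        (hVdiff.continuous.continuousAt).continuousWithinAt.tendsto
      refine ge_of_tendsto htend ?_
      filter_upwards [Ioc_mem_nhdsGT_of_mem ⟨le_refl σ, hσt⟩] with u hu
      exact (hgt u hu.1 hu.2).le
    have hderiv_neg : deriv V σ < 0 := by
      have h1 := hC σ hσE.1.1 hVσR.ge
      have h2 : 0 < a * V σ ^ p + b * V σ ^ q := by
        rw [hVσR]; exact aux_denom_pos ha hb hR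
      linarith
    have hderiv_nonneg : 0 ≤ deriv V σ := by
      have hd : HasDerivAt V (deriv V σ) σ := (hVdiff σ).hasDerivAt
      have hslope := hasDerivAt_iff_tendsto_slope.1 hd
      have hslope' : Filter.Tendsto (slope V σ) (nhdsWithin σ (Ioi σ))
          (nhds (deriv V σ)) :=
        hslope.mono_left (nhdsWithin_mono σ (fun u hu => ne_of_gt hu))
      refine ge_of_tendsto hslope' ?_
      filter_upwards [Ioc_mem_nhdsGT_of_mem ⟨le_refl σ, hσt⟩] with u hu
      have hpos : 0 < u - σ := sub_pos.2 hu.1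
      have hnum : 0 ≤ V u - V σ := by
        rw [hVσR]; exact sub_nonneg.2 (hgt u hu.1 hu.2).le
      rw [slope_def_field]
      exact div_nonneg hnum hpos.le
    exact hderiv_nonneg.not_gt hderiv_neg
  · push_neg at hE
    have hgt : ∀ u, u ∈ Icc 0 t → R < V u := fun u hu => hE u hu
    set h : ℝ → ℝ := fun u => G (V u) + u with hh
    have hhd : ∀ u ∈ Icc 0 t, HasDerivAt h (f (V u) * deriv V u + 1) u := by
      intro u hu
      have hVpos : 0 < V u := hR.trans (hgt u hu)
      have h1 : HasDerivAt G (f (V u)) (V u) := hG_deriv _ hVpos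
      have h2 : HasDerivAt V (deriv V u) u := (hVdiff u).hasDerivAt
      exact (h1.comp u h2).add (hasDerivAt_id u)
    have hanti : AntitoneOn h (Icc 0 t) := by
      apply antitoneOn_of_deriv_nonpos (convex_Icc 0 t)
      · intro u hu
        exact (hhd u hu).continuousAt.continuousWithinAt
      · intro u hu
        rw [interior_Icc] at hu
        exact (hhd u (Ioo_subset_Icc_self hu)).differentiableAt.differentiableWithinAt
      · intro u hu
        rw [interior_Icc] at hu
        have huIcc := Ioo_subset_Icc_self hu
        rw [(hhd u huIcc).deriv]
        have hVpos : 0 < V u := hR.trans (hgt u huIcc)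
        have hD : 0 < a * V u ^ p + b * V u ^ q := aux_denom_pos ha hb hVpos
        have hder := hC u huIcc.1 (hgt u huIcc).le
        have hle : f (V u) * deriv V u ≤ f (V u) * (-(a * V u ^ p + b * V u ^ q)) :=
          mul_le_mul_of_nonneg_left hder (inv_pos.2 hD).le
        have heq : f (V u) * (-(a * V u ^ p + b * V u ^ q)) = -1 := by
          rw [hf]
          field_simp
        linarith
    have hht := hanti (left_mem_Icc.2 ht0.le) (right_mem_Icc.2 ht0.le) ht0.le
    have h1 : G R ≤ G (V t) :=
      hG_mono R (V t) hR.le (hgt t (right_mem_Icc.2 ht0.le)).le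
    have h2 : G (V 0) ≤ I := hG_le_I (V 0) (hR.trans (hgt 0 (left_mem_Icc.2 ht0.le))).le
    simp only [hh] at hht
    linarith

end aux

open Real


theorem improved_fixed_time_stability
    (p q μ₁ μ₂ μ₃ τ : ℝ)
    (hp : 0 < p) (hp1 : p < 1) (hq : 1 < q)
    (hμ₁ : 0 < μ₁) (hμ₂ : 0 < μ₂) (hμ₃ : 0 < μ₃)
    (hτ : τ ∈ Set.Ioo (0 : ℝ) 1)
    (V : ℝ → ℝ) (hVdiff : Differentiable ℝ V)
    (hVnonneg : ∀ t, 0 ≤ t → 0 ≤ V t)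
    (hVineq : ∀ t, 0 ≤ t →
      deriv V t ≤ -μ₁ * (V t) ^ p - μ₂ * (V t) ^ q + μ₃) :
    ∀ t,
      max ((Real.Gamma ((1 - p) / (q - p)) * Real.Gamma ((q - 1) / (q - p))
              / (μ₁ * (q - p))) * (μ₁ / (τ * μ₂)) ^ ((1 - p) / (q - p)))
          ((Real.Gamma ((1 - p) / (q - p)) * Real.Gamma ((q - 1) / (q - p))
              / (τ * μ₁ * (q - p))) * (τ * μ₁ / μ₂) ^ ((1 - p) / (q - p)))
        ≤ t →
      V t ≤ min ((μ₃ / ((1 - τ) * μ₁)) ^ (1 / p))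
                ((μ₃ / ((1 - τ) * μ₂)) ^ (1 / q)) := by
  intro t ht
  obtain ⟨hτ0, hτ1⟩ := hτ
  have h1τ : 0 < 1 - τ := by linarith
  have hM₁ : 0 < μ₃ / ((1 - τ) * μ₁) := by positivity
  have hM₂ : 0 < μ₃ / ((1 - τ) * μ₂) := by positivity
  have hR₁ : 0 < (μ₃ / ((1 - τ) * μ₁)) ^ (1 / p) := Real.rpow_pos_of_pos hM₁ _
  have hR₂ : 0 < (μ₃ / ((1 - τ) * μ₂)) ^ (1 / q) := Real.rpow_pos_of_pos hM₂ _
  rcases le_total ((μ₃ / ((1 - τ) * μ₁)) ^ (1 / p)) ((μ₃ / ((1 - τ) * μ₂)) ^ (1 / q))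
    with hcase | hcase
  · rw [min_eq_left hcase]
    refine settle hp hp1 hq (mul_pos hτ0 hμ₁) hμ₂ hR₁ V hVdiff ?_ ?_
    · intro u hu hVu
      have hRp : ((μ₃ / ((1 - τ) * μ₁)) ^ (1 / p)) ^ p = μ₃ / ((1 - τ) * μ₁) := by
        rw [← Real.rpow_mul hM₁.le, one_div, inv_mul_cancel₀ hp.ne', Real.rpow_one]
      have hmono : ((μ₃ / ((1 - τ) * μ₁)) ^ (1 / p)) ^ p ≤ V u ^ p :=
        Real.rpow_le_rpow hR₁.le hVu hp.le
      rw [hRp] at hmono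
      have key : μ₃ ≤ V u ^ p * ((1 - τ) * μ₁) := (div_le_iff₀ (by positivity)).1 hmono
      have hineq := hVineq u hu
      calc deriv V u ≤ -μ₁ * V u ^ p - μ₂ * V u ^ q + μ₃ := hineq
        _ ≤ -μ₁ * V u ^ p - μ₂ * V u ^ q + V u ^ p * ((1 - τ) * μ₁) := by linarith
        _ = -(τ * μ₁ * V u ^ p + μ₂ * V u ^ q) := by ring
    · rw [key_integral hp hp1 hq (mul_pos hτ0 hμ₁) hμ₂]
      exact le_trans (le_max_right _ _) ht
  · rw [min_eq_right hcase]
    refine settle hp hp1 hq hμ₁ (mul_pos hτ0 hμ₂) hR₂ V hVdiff ?_ ?_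
    · intro u hu hVu
      have hRq : ((μ₃ / ((1 - τ) * μ₂)) ^ (1 / q)) ^ q = μ₃ / ((1 - τ) * μ₂) := by
        rw [← Real.rpow_mul hM₂.le, one_div, inv_mul_cancel₀ (by linarith : q ≠ 0),
          Real.rpow_one]
      have hmono : ((μ₃ / ((1 - τ) * μ₂)) ^ (1 / q)) ^ q ≤ V u ^ q :=
        Real.rpow_le_rpow hR₂.le hVu (by linarith)
      rw [hRq] at hmono
      have key : μ₃ ≤ V u ^ q * ((1 - τ) * μ₂) := (div_le_iff₀ (by positivity)).1 hmono
      have hineq := hVineq u hu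
      calc deriv V u ≤ -μ₁ * V u ^ p - μ₂ * V u ^ q + μ₃ := hineq
        _ ≤ -μ₁ * V u ^ p - μ₂ * V u ^ q + V u ^ q * ((1 - τ) * μ₂) := by linarith
        _ = -(μ₁ * V u ^ p + τ * μ₂ * V u ^ q) := by ring
    · rw [key_integral hp hp1 hq hμ₁ (mul_pos hτ0 hμ₂)]
      exact le_trans (le_max_left _ _) ht
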